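/- The jet functor is left adjoint to the forgetful functor from D_M-algebras to O_M-algebras: for every smooth map π : C → M there is a D_M-algebra Jet(O_C) with a natural bijection Hom_{D_M-alg}(Jet(O_C), A) ≅ Hom_{O_M-alg}(O_C, A) for every commutative D_M-algebra A. -/

import Mathlib

/-- A differential algebra over `O_M = k[t]` (algebraically, a `D_M`-algebra for
`D_M = k[t]⟨∂_t⟩`): a commutative `k[t]`-algebra equipped with a derivation extending
`∂_t` on `k[t]`. -/
structure DiffAlg (k : Type) [CommRing k] where
  carrier : Type
  [commRing : CommRing carrier]
  [algk : Algebra k carrier]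
  [algkt : Algebra (Polynomial k) carrier]
  [tower : IsScalarTower k (Polynomial k) carrier]
  δ : Derivation k carrier carrier
  compat : ∀ p : Polynomial k,
    δ (algebraMap (Polynomial k) carrier p) =
      algebraMap (Polynomial k) carrier (Polynomial.derivative p)

attribute [instance] DiffAlg.commRing DiffAlg.algk DiffAlg.algkt DiffAlg.tower

set_option linter.unusedSectionVars false

noncomputable section JetConstruction
open MvPolynomial

variable (k : Type) [CommRing k] (C : Type) [CommRing C] [Algebra (Polynomial k) C]

def jetAlgebra : Algebra (Polynomial k) (MvPolynomial (Option (ℕ × C)) k) :=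
  (Polynomial.aeval (X none : MvPolynomial (Option (ℕ × C)) k)).toRingHom.toAlgebra

attribute [local instance] jetAlgebra

lemma jet_algebraMap_eq (p : Polynomial k) :
    algebraMap (Polynomial k) (MvPolynomial (Option (ℕ × C)) k) p =
      Polynomial.aeval (X none : MvPolynomial (Option (ℕ × C)) k) p := rfl

def jetTower : IsScalarTower k (Polynomial k) (MvPolynomial (Option (ℕ × C)) k) :=
  IsScalarTower.of_algebraMap_eq fun r => by
    rw [jet_algebraMap_eq]; simp

attribute [local instance] jetTower

def jetDer : Derivation k (MvPolynomial (Option (ℕ × C)) k) (MvPolynomial (Option (ℕ × C)) k) :=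
  mkDerivation k (fun v => match v with
    | none => 1
    | some (n, c) => X (some (n + 1, c)))

lemma jetDer_none : jetDer k C (X none) = 1 := mkDerivation_X _ _ _

lemma jetDer_some (n : ℕ) (c : C) :
    jetDer k C (X (some (n, c))) = X (some (n + 1, c)) := mkDerivation_X _ _ _

lemma jetDer_algebraMap (p : Polynomial k) :
    jetDer k C (algebraMap (Polynomial k) _ p) =
      algebraMap (Polynomial k) _ (Polynomial.derivative p) := by
  rw [jet_algebraMap_eq, jet_algebraMap_eq, Derivation.map_aeval, jetDer_none, smul_eq_mul,
    mul_one]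

/-- The basic relations forcing `c ↦ X (0, c)` to be a `k[t]`-algebra map. -/
def jetRels : Set (MvPolynomial (Option (ℕ × C)) k) :=
  {a | ∃ c c' : C, a = X (some (0, c + c')) - X (some (0, c)) - X (some (0, c'))} ∪
  {a | ∃ c c' : C, a = X (some (0, c * c')) - X (some (0, c)) * X (some (0, c'))} ∪
  {a | ∃ p : Polynomial k,
    a = X (some (0, algebraMap (Polynomial k) C p)) - algebraMap (Polynomial k) _ p}

/-- The differential closure of the relations. -/
def jetRelsClosure : Set (MvPolynomial (Option (ℕ × C)) k) :=
  ⋃ n : ℕ, (fun a => (jetDer k C)^[n] a) '' jetRels k C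

def jetIdeal : Ideal (MvPolynomial (Option (ℕ × C)) k) :=
  Ideal.span (jetRelsClosure k C)

lemma jetRelsClosure_subset : jetRels k C ⊆ jetRelsClosure k C := fun a ha =>
  Set.mem_iUnion.2 ⟨0, ⟨a, ha, rfl⟩⟩

lemma jetIdeal_der_mem : ∀ x ∈ jetIdeal k C, jetDer k C x ∈ jetIdeal k C := by
  intro x hx
  refine Submodule.span_induction ?_ ?_ ?_ ?_ hx
  · rintro a ha
    rw [jetRelsClosure] at ha
    obtain ⟨n, b, hb, rfl⟩ := Set.mem_iUnion.1 ha
    refine Ideal.subset_span (Set.mem_iUnion.2 ⟨n + 1, b, hb, ?_⟩)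
    simp only []
    rw [Function.iterate_succ_apply']
  · simp [jetIdeal]
  · intro a b _ _ ha hb
    rw [map_add]; exact Ideal.add_mem _ ha hb
  · intro a x hxmem hdx
    rw [smul_eq_mul, Derivation.leibniz, smul_eq_mul, smul_eq_mul]
    have hx' : x ∈ jetIdeal k C := hxmem
    exact Ideal.add_mem _ (Ideal.mul_mem_left _ _ hdx) (Ideal.mul_mem_right _ _ hx')

/-- The jet ring. -/
def JetRing : Type := MvPolynomial (Option (ℕ × C)) k ⧸ jetIdeal k C

instance : CommRing (JetRing k C) := Ideal.Quotient.commRing _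
instance : Algebra k (JetRing k C) := Ideal.Quotient.algebra _
instance : Algebra (Polynomial k) (JetRing k C) := Ideal.Quotient.algebra _
instance : IsScalarTower k (Polynomial k) (JetRing k C) :=
  Ideal.Quotient.isScalarTower _ _ _

def jetMk : MvPolynomial (Option (ℕ × C)) k →ₐ[Polynomial k] JetRing k C :=
  Ideal.Quotient.mkₐ _ _

lemma jetMk_surjective : Function.Surjective (jetMk k C) :=
  Ideal.Quotient.mkₐ_surjective _ _

lemma jetMk_eq_zero_iff (a : MvPolynomial (Option (ℕ × C)) k) :
    jetMk k C a = 0 ↔ a ∈ jetIdeal k C := by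
  exact Ideal.Quotient.eq_zero_iff_mem

/-- The derivation descends to the quotient. -/
def jetRingDerFun : JetRing k C → JetRing k C := fun x =>
  Quotient.liftOn' x (fun a => jetMk k C (jetDer k C a)) (by
    intro a b hab
    have h : a - b ∈ jetIdeal k C := by
      rwa [Submodule.quotientRel_def] at hab
    have h2 : jetDer k C (a - b) ∈ jetIdeal k C := jetIdeal_der_mem k C _ h
    rw [map_sub] at h2
    have := Ideal.Quotient.eq.2 h2
    exact this)

lemma jetRingDerFun_mk (a : MvPolynomial (Option (ℕ × C)) k) :
    jetRingDerFun k C (jetMk k C a) = jetMk k C (jetDer k C a) := rfl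

lemma jetMk_rel {a : MvPolynomial (Option (ℕ × C)) k} (ha : a ∈ jetRels k C) :
    jetMk k C a = 0 :=
  (jetMk_eq_zero_iff k C a).2 (Ideal.subset_span (jetRelsClosure_subset k C ha))

def jetRingDer : Derivation k (JetRing k C) (JetRing k C) where
  toFun := jetRingDerFun k C
  map_add' x y := by
    obtain ⟨a, rfl⟩ := jetMk_surjective k C x
    obtain ⟨b, rfl⟩ := jetMk_surjective k C y
    rw [← map_add, jetRingDerFun_mk, jetRingDerFun_mk, jetRingDerFun_mk, ← map_add, map_add]
  map_smul' r x := by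
    obtain ⟨a, rfl⟩ := jetMk_surjective k C x
    have h1 : r • jetMk k C a = jetMk k C (r • a) :=
      (map_smul (Ideal.Quotient.mkₐ k (jetIdeal k C)) r a).symm
    simp only [RingHom.id_apply]
    rw [h1, jetRingDerFun_mk, jetRingDerFun_mk, (jetDer k C).map_smul]
    exact map_smul (Ideal.Quotient.mkₐ k (jetIdeal k C)) r _
  map_one_eq_zero' := by
    have : (1 : JetRing k C) = jetMk k C 1 := (map_one _).symm
    rw [LinearMap.coe_mk, AddHom.coe_mk, this, jetRingDerFun_mk,
      (jetDer k C).map_one_eq_zero, map_zero]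
  leibniz' x y := by
    obtain ⟨a, rfl⟩ := jetMk_surjective k C x
    obtain ⟨b, rfl⟩ := jetMk_surjective k C y
    rw [LinearMap.coe_mk, AddHom.coe_mk, ← map_mul, jetRingDerFun_mk, Derivation.leibniz,
      map_add, smul_eq_mul, smul_eq_mul, map_mul, map_mul, smul_eq_mul, smul_eq_mul,
      jetRingDerFun_mk, jetRingDerFun_mk]

lemma jetRingDer_mk (a : MvPolynomial (Option (ℕ × C)) k) :
    jetRingDer k C (jetMk k C a) = jetMk k C (jetDer k C a) := rfl

lemma jet_algebraMap_mk (p : Polynomial k) :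
    algebraMap (Polynomial k) (JetRing k C) p =
      jetMk k C (algebraMap (Polynomial k) _ p) :=
  ((jetMk k C).commutes p).symm

lemma jetRingDer_compat (p : Polynomial k) :
    jetRingDer k C (algebraMap (Polynomial k) (JetRing k C) p) =
      algebraMap (Polynomial k) (JetRing k C) (Polynomial.derivative p) := by
  rw [jet_algebraMap_mk, jetRingDer_mk, jetDer_algebraMap, ← jet_algebraMap_mk]

/-- The jet `D`-algebra. -/
def jetDiffAlg : DiffAlg k where
  carrier := JetRing k C
  δ := jetRingDer k C
  compat := jetRingDer_compat k C

/-- The unit map `ι : C → Jet(C)`. -/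
def jetIota : C →ₐ[Polynomial k] JetRing k C where
  toFun c := jetMk k C (X (some (0, c)))
  map_one' := by
    have h := jetMk_rel k C (a := X (some (0, algebraMap (Polynomial k) C 1)) -
        algebraMap (Polynomial k) _ 1) (Or.inr ⟨1, rfl⟩)
    rw [map_sub, sub_eq_zero] at h
    simpa using h
  map_mul' c c' := by
    show jetMk k C (X (some (0, c * c'))) = jetMk k C (X (some (0, c))) * jetMk k C (X (some (0, c')))
    have h := jetMk_rel k C (a := X (some (0, c * c')) - X (some (0, c)) * X (some (0, c')))
      (Or.inl (Or.inr ⟨c, c', rfl⟩))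
    rw [map_sub, sub_eq_zero, map_mul] at h
    exact h

  map_zero' := by
    have h := jetMk_rel k C (a := X (some (0, algebraMap (Polynomial k) C 0)) -
        algebraMap (Polynomial k) _ 0) (Or.inr ⟨0, rfl⟩)
    rw [map_sub, sub_eq_zero] at h
    simpa using h
  map_add' c c' := by
    show jetMk k C (X (some (0, c + c'))) = jetMk k C (X (some (0, c))) + jetMk k C (X (some (0, c')))
    have h := jetMk_rel k C (a := X (some (0, c + c')) - X (some (0, c)) - X (some (0, c')))
      (Or.inl (Or.inl ⟨c, c', rfl⟩))
    rw [map_sub, map_sub, sub_sub, sub_eq_zero] at h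
    exact h
  commutes' p := by
    show jetMk k C (X (some (0, algebraMap (Polynomial k) C p))) =
      algebraMap (Polynomial k) (JetRing k C) p
    have h := jetMk_rel k C (a := X (some (0, algebraMap (Polynomial k) C p)) -
        algebraMap (Polynomial k) _ p) (Or.inr ⟨p, rfl⟩)
    rw [map_sub, sub_eq_zero] at h
    rw [h, ← jet_algebraMap_mk]

lemma jetMk_X_eq_iterate (n : ℕ) (c : C) :
    jetMk k C (X (some (n, c))) = (fun x => jetRingDer k C x)^[n] (jetIota k C c) := by
  induction n with
  | zero => rfl
  | succ n ih =>
    rw [Function.iterate_succ_apply', ← ih, jetRingDer_mk, jetDer_some]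

variable {k C} (B : DiffAlg k) (g : C →ₐ[Polynomial k] B.carrier)

/-- The lift of `g` to the free ring. -/
def jetLiftPre : MvPolynomial (Option (ℕ × C)) k →ₐ[k] B.carrier :=
  aeval (fun v => match v with
    | none => algebraMap (Polynomial k) B.carrier Polynomial.X
    | some (n, c) => (fun x => B.δ x)^[n] (g c))

lemma jetLiftPre_X_none :
    jetLiftPre B g (X none) = algebraMap (Polynomial k) B.carrier Polynomial.X :=
  aeval_X _ _

lemma jetLiftPre_X_some (n : ℕ) (c : C) :
    jetLiftPre B g (X (some (n, c))) = (fun x => B.δ x)^[n] (g c) :=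
  aeval_X _ _

lemma jetLiftPre_der (a : MvPolynomial (Option (ℕ × C)) k) :
    jetLiftPre B g (jetDer k C a) = B.δ (jetLiftPre B g a) := by
  induction a using MvPolynomial.induction_on with
  | C r =>
    rw [show (MvPolynomial.C r : MvPolynomial (Option (ℕ × C)) k) =
        algebraMap k _ r from rfl, Derivation.map_algebraMap, map_zero,
      AlgHom.commutes, Derivation.map_algebraMap]
  | add p q hp hq =>
    rw [map_add, map_add, map_add, map_add, hp, hq]
  | mul_X p v hp =>
    have hX : jetLiftPre B g (jetDer k C (X v)) = B.δ (jetLiftPre B g (X v)) := by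
      match v with
      | none =>
        rw [jetDer_none, map_one, jetLiftPre_X_none, B.compat, Polynomial.derivative_X, map_one]
      | some (n, c) =>
        rw [jetDer_some, jetLiftPre_X_some, jetLiftPre_X_some, Function.iterate_succ_apply']
    rw [Derivation.leibniz, map_add, smul_eq_mul, smul_eq_mul, map_mul, map_mul, map_mul,
      Derivation.leibniz, smul_eq_mul, smul_eq_mul, hp, hX]

lemma jetLiftPre_algebraMap (p : Polynomial k) :
    jetLiftPre B g (algebraMap (Polynomial k) _ p) = algebraMap (Polynomial k) B.carrier p := by
  rw [jet_algebraMap_eq, ← Polynomial.aeval_algHom_apply, jetLiftPre_X_none]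
  have h1 : algebraMap (Polynomial k) B.carrier Polynomial.X =
      (IsScalarTower.toAlgHom k (Polynomial k) B.carrier) Polynomial.X := rfl
  rw [h1, Polynomial.aeval_algHom_apply, Polynomial.aeval_X_left_apply]
  rfl

lemma jetLiftPre_rels {a : MvPolynomial (Option (ℕ × C)) k} (ha : a ∈ jetRels k C) :
    jetLiftPre B g a = 0 := by
  rcases ha with (⟨c, c', rfl⟩ | ⟨c, c', rfl⟩) | ⟨p, rfl⟩
  · rw [map_sub, map_sub, jetLiftPre_X_some, jetLiftPre_X_some, jetLiftPre_X_some]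
    simp only [Function.iterate_zero, id_eq]
    rw [map_add, sub_sub, sub_self]
  · rw [map_sub, map_mul, jetLiftPre_X_some, jetLiftPre_X_some, jetLiftPre_X_some]
    simp only [Function.iterate_zero, id_eq]
    rw [map_mul, sub_self]
  · rw [map_sub, jetLiftPre_X_some, jetLiftPre_algebraMap]
    simp only [Function.iterate_zero, id_eq]
    rw [g.commutes, sub_self]

lemma jetLiftPre_ideal {a : MvPolynomial (Option (ℕ × C)) k} (ha : a ∈ jetIdeal k C) :
    jetLiftPre B g a = 0 := by
  have hker : jetIdeal k C ≤ RingHom.ker (jetLiftPre B g).toRingHom := by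
    rw [jetIdeal, Ideal.span_le]
    rintro x hx
    obtain ⟨n, b, hb, rfl⟩ := Set.mem_iUnion.1 hx
    have key : ∀ m : ℕ, jetLiftPre B g ((fun y => jetDer k C y)^[m] b) = 0 := by
      intro m
      induction m with
      | zero => exact jetLiftPre_rels B g hb
      | succ m ih =>
        rw [Function.iterate_succ_apply']
        show jetLiftPre B g (jetDer k C _) = 0
        rw [jetLiftPre_der, ih, map_zero]
    exact key n
  exact hker ha

/-- The lift to the jet ring, as a `k[t]`-algebra map. -/
def jetLift : JetRing k C →ₐ[Polynomial k] B.carrier :=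
  { Ideal.Quotient.lift (jetIdeal k C) (jetLiftPre B g).toRingHom
      (fun a ha => jetLiftPre_ideal B g ha) with
    commutes' := by
      intro p
      show Ideal.Quotient.lift (jetIdeal k C) (jetLiftPre B g).toRingHom _
        (algebraMap (Polynomial k) (JetRing k C) p) = algebraMap (Polynomial k) B.carrier p
      rw [jet_algebraMap_mk]
      rw [show ((jetMk k C) (algebraMap (Polynomial k) _ p) : JetRing k C) =
        Ideal.Quotient.mk (jetIdeal k C) (algebraMap (Polynomial k) _ p) from rfl]
      rw [Ideal.Quotient.lift_mk]
      exact jetLiftPre_algebraMap B g p }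

lemma jetLift_mk (a : MvPolynomial (Option (ℕ × C)) k) :
    jetLift B g (jetMk k C a) = jetLiftPre B g a := rfl

lemma jetLift_der (x : JetRing k C) :
    jetLift B g (jetRingDer k C x) = B.δ (jetLift B g x) := by
  obtain ⟨a, rfl⟩ := jetMk_surjective k C x
  rw [jetRingDer_mk, jetLift_mk, jetLift_mk, jetLiftPre_der]

lemma jetLift_iota (c : C) : jetLift B g (jetIota k C c) = g c := by
  rw [show (jetIota k C c : JetRing k C) = jetMk k C (X (some (0, c))) from rfl, jetLift_mk,
    jetLiftPre_X_some]
  rfl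

lemma jet_hom_ext {f1 f2 : JetRing k C →ₐ[Polynomial k] B.carrier}
    (h1 : ∀ x, f1 (jetRingDer k C x) = B.δ (f1 x))
    (h2 : ∀ x, f2 (jetRingDer k C x) = B.δ (f2 x))
    (hι : f1.comp (jetIota k C) = f2.comp (jetIota k C)) : f1 = f2 := by
  have hiter : ∀ (f : JetRing k C →ₐ[Polynomial k] B.carrier),
      (∀ x, f (jetRingDer k C x) = B.δ (f x)) → ∀ (n : ℕ) (y : JetRing k C),
      f ((fun x => jetRingDer k C x)^[n] y) = (fun x => B.δ x)^[n] (f y) := by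
    intro f hf n
    induction n with
    | zero => intro y; rfl
    | succ n ih =>
      intro y
      rw [Function.iterate_succ_apply', Function.iterate_succ_apply']
      show f (jetRingDer k C _) = _
      rw [hf, ih]
  have key : ∀ v : Option (ℕ × C), f1 (jetMk k C (X v)) = f2 (jetMk k C (X v)) := by
    intro v
    match v with
    | none =>
      have hX : jetMk k C (X (none : Option (ℕ × C))) =
          algebraMap (Polynomial k) (JetRing k C) Polynomial.X := by
        rw [jet_algebraMap_mk, jet_algebraMap_eq, Polynomial.aeval_X]
      rw [hX, f1.commutes, f2.commutes]
    | some (n, c) =>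
      have hc : f1 (jetIota k C c) = f2 (jetIota k C c) := AlgHom.congr_fun hι c
      rw [jetMk_X_eq_iterate, hiter f1 h1, hiter f2 h2, hc]
  have hext : (f1.restrictScalars k).comp ((jetMk k C).restrictScalars k) =
      (f2.restrictScalars k).comp ((jetMk k C).restrictScalars k) :=
    MvPolynomial.algHom_ext fun v => key v
  ext x
  obtain ⟨a, rfl⟩ := jetMk_surjective k C x
  exact AlgHom.congr_fun hext a

end JetConstruction

/-- The jet functor is left adjoint to the forgetful functor from `D_M`-algebras to
`O_M`-algebras (here `O_M = k[t]`, `D_M = k[t]⟨∂_t⟩`): for every commutative `O_M`-algebra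
`O_C` there is a `D_M`-algebra `Jet(O_C)` together with an `O_M`-algebra map
`ι : O_C → Jet(O_C)` such that for every `D_M`-algebra `B`, composition with `ι` is a
bijection `Hom_{D_M-alg}(Jet(O_C), B) ≅ Hom_{O_M-alg}(O_C, B)`. -/
theorem jet_left_adjoint (k : Type) [CommRing k]
    (C : Type) [CommRing C] [Algebra (Polynomial k) C] :
    ∃ (J : DiffAlg k) (ι : C →ₐ[Polynomial k] J.carrier),
      ∀ B : DiffAlg k,
        Function.Bijective
          (fun (φ : {f : J.carrier →ₐ[Polynomial k] B.carrier //
              ∀ a : J.carrier, f (J.δ a) = B.δ (f a)}) =>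
            (φ.1.comp ι : C →ₐ[Polynomial k] B.carrier)) := by
  refine ⟨jetDiffAlg k C, jetIota k C, fun B => ⟨?_, ?_⟩⟩
  · intro φ ψ h
    exact Subtype.ext (jet_hom_ext B φ.2 ψ.2 h)
  · intro g
    exact ⟨⟨jetLift B g, jetLift_der B g⟩,
      AlgHom.ext fun c => jetLift_iota B g c⟩
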